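/- Let c > 0 and let w : ℝ → ℝ be continuous with w > 0, and suppose ∫₀ᵗ w(s) ds → +∞ as t → +∞ and ∫₀ᵗ w(s) ds → −∞ as t → −∞. If θ : ℝ → ℝ is differentiable and satisfies θ′(t) + c·w(t)·θ(t)² ≤ 0 for all t ∈ ℝ, then θ ≡ 0. -/

import Mathlib

open Filter MeasureTheory

/-- Global rigidity for the weighted Riccati inequality: if `w` is continuous and
positive with `∫₀ᵗ w → ±∞` as `t → ±∞`, `c > 0`, and a differentiable `θ : ℝ → ℝ`
satisfies `θ' + c·w·θ² ≤ 0` everywhere, then `θ ≡ 0`. -/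
theorem weighted_riccati_rigidity
    (c : ℝ) (hc : 0 < c)
    (w : ℝ → ℝ) (hw_cont : Continuous w) (hw_pos : ∀ t, 0 < w t)
    (h_top : Filter.Tendsto (fun t : ℝ => ∫ s in (0 : ℝ)..t, w s) Filter.atTop Filter.atTop)
    (h_bot : Filter.Tendsto (fun t : ℝ => ∫ s in (0 : ℝ)..t, w s) Filter.atBot Filter.atBot)
    (θ : ℝ → ℝ) (hθ : Differentiable ℝ θ)
    (hriccati : ∀ t : ℝ, deriv θ t + c * w t * (θ t) ^ 2 ≤ 0) :
    ∀ t : ℝ, θ t = 0 := by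
  have hwint : ∀ a b : ℝ, IntervalIntegrable w volume a b := fun a b =>
    hw_cont.intervalIntegrable a b
  have hmono : Antitone θ := by
    apply antitone_of_deriv_nonpos hθ
    intro t
    nlinarith [hriccati t, mul_nonneg (mul_nonneg hc.le (hw_pos t).le) (sq_nonneg (θ t))]
  intro a
  by_contra hne
  -- FTC: derivative of the primitive of w based at a
  have hG : ∀ t : ℝ, HasDerivAt (fun u => ∫ s in a..u, w s) (w t) t := fun t =>
    intervalIntegral.integral_hasDerivAt_right (hwint a t)
      (hw_cont.stronglyMeasurableAtFilter volume (nhds t)) hw_cont.continuousAt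
  have hGdiff : Differentiable ℝ (fun u => ∫ s in a..u, w s) := fun t =>
    (hG t).differentiableAt
  have hGcont : Continuous (fun u => ∫ s in a..u, w s) := hGdiff.continuous
  -- the reparametrized time diverges in both directions
  have hsub : ∀ t : ℝ, (∫ s in a..t, w s)
      = (∫ s in (0:ℝ)..t, w s) + -(∫ s in (0:ℝ)..a, w s) := by
    intro t
    rw [← sub_eq_add_neg, intervalIntegral.integral_interval_sub_left (hwint 0 t) (hwint 0 a)]
  have key_top : Tendsto (fun t : ℝ => c * ∫ s in a..t, w s) atTop atTop := by
    refine (Tendsto.const_mul_atTop hc ?_)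
    simp only [hsub]
    exact tendsto_atTop_add_const_right _ _ h_top
  have key_bot : Tendsto (fun t : ℝ => c * ∫ s in a..t, w s) atBot atBot := by
    refine (Tendsto.const_mul_atBot hc ?_)
    simp only [hsub]
    exact tendsto_atBot_add_const_right _ _ h_bot
  have hxsq : ∀ t : ℝ, θ t ≠ 0 → (0:ℝ) < θ t ^ 2 := fun t ht => by positivity
  rcases lt_or_gt_of_ne hne with hneg | hpos
  · -- Case θ a < 0 : work on [a, ∞)
    have hθlt : ∀ t ∈ Set.Ici a, θ t < 0 := fun t ht => lt_of_le_of_lt (hmono ht) hneg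
    set h : ℝ → ℝ := fun t => -(θ t)⁻¹ + c * ∫ s in a..t, w s with hh
    have hderiv : ∀ t : ℝ, θ t ≠ 0 →
        HasDerivAt h (deriv θ t / θ t ^ 2 + c * w t) t := by
      intro t ht
      have h1 : HasDerivAt (fun u => (θ u)⁻¹) (-deriv θ t / θ t ^ 2) t :=
        ((hθ t).hasDerivAt).inv ht
      have := h1.neg.add ((hG t).const_mul c)
      rw [neg_div, neg_neg] at this
      exact this
    have hanti : AntitoneOn h (Set.Ici a) := by
      apply antitoneOn_of_deriv_nonpos (convex_Ici a)
      · exact (((hθ.continuous.continuousOn).inv₀ fun t ht => (hθlt t ht).ne).neg.add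
          ((continuous_const.mul hGcont).continuousOn))
      · intro t ht
        rw [interior_Ici] at ht
        exact (hderiv t (hθlt t (Set.mem_Ici.mpr (le_of_lt (Set.mem_Ioi.mp ht)))).ne).differentiableAt.differentiableWithinAt
      · intro t ht
        rw [interior_Ici] at ht
        have htne : θ t ≠ 0 := (hθlt t (Set.mem_Ici.mpr (le_of_lt (Set.mem_Ioi.mp ht)))).ne
        rw [(hderiv t htne).deriv]
        have h2 : (0:ℝ) < θ t ^ 2 := hxsq t htne
        have h3 : deriv θ t / θ t ^ 2 ≤ -(c * w t) := by
          rw [div_le_iff₀ h2]; nlinarith [hriccati t]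
        linarith
    obtain ⟨t, hta, htgt⟩ : ∃ t : ℝ, a ≤ t ∧ -(θ a)⁻¹ < c * ∫ s in a..t, w s := by
      have := (eventually_ge_atTop a).and (key_top.eventually_gt_atTop (-(θ a)⁻¹))
      obtain ⟨t, ht1, ht2⟩ := this.exists
      exact ⟨t, ht1, ht2⟩
    have hle : h t ≤ h a := hanti Set.self_mem_Ici hta hta
    have hha : h a = -(θ a)⁻¹ := by simp [hh]
    have hθt : (θ t)⁻¹ < 0 := inv_lt_zero.mpr (hθlt t hta)
    rw [hha] at hle
    simp only [hh] at hle
    linarith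
  · -- Case θ a > 0 : work on (-∞, a]
    have hθgt : ∀ t ∈ Set.Iic a, 0 < θ t := fun t ht => lt_of_lt_of_le hpos (hmono ht)
    set h : ℝ → ℝ := fun t => (θ t)⁻¹ - c * ∫ s in a..t, w s with hh
    have hderiv : ∀ t : ℝ, θ t ≠ 0 →
        HasDerivAt h (-deriv θ t / θ t ^ 2 - c * w t) t := by
      intro t ht
      have h1 : HasDerivAt (fun u => (θ u)⁻¹) (-deriv θ t / θ t ^ 2) t :=
        ((hθ t).hasDerivAt).inv ht
      exact h1.sub ((hG t).const_mul c)
    have hmon : MonotoneOn h (Set.Iic a) := by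
      apply monotoneOn_of_deriv_nonneg (convex_Iic a)
      · exact (((hθ.continuous.continuousOn).inv₀ fun t ht => (hθgt t ht).ne').sub
          ((continuous_const.mul hGcont).continuousOn))
      · intro t ht
        rw [interior_Iic] at ht
        exact (hderiv t (hθgt t (Set.mem_Iic.mpr ht.le)).ne').differentiableAt.differentiableWithinAt
      · intro t ht
        rw [interior_Iic] at ht
        have htne : θ t ≠ 0 := (hθgt t (Set.mem_Iic.mpr ht.le)).ne'
        rw [(hderiv t htne).deriv]
        have h2 : (0:ℝ) < θ t ^ 2 := hxsq t htne
        have h3 : c * w t ≤ -deriv θ t / θ t ^ 2 := by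
          rw [le_div_iff₀ h2]; nlinarith [hriccati t]
        linarith
    obtain ⟨t, hta, htlt⟩ : ∃ t : ℝ, t ≤ a ∧ c * (∫ s in a..t, w s) < -(θ a)⁻¹ := by
      have := (eventually_le_atBot a).and (key_bot.eventually_lt_atBot (-(θ a)⁻¹))
      obtain ⟨t, ht1, ht2⟩ := this.exists
      exact ⟨t, ht1, ht2⟩
    have hle : h t ≤ h a := hmon hta Set.self_mem_Iic hta
    have hha : h a = (θ a)⁻¹ := by simp [hh]
    have hθt : 0 < (θ t)⁻¹ := inv_pos.mpr (hθgt t hta)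
    rw [hha] at hle
    simp only [hh] at hle
    have hθa : 0 < (θ a)⁻¹ := inv_pos.mpr hpos
    linarith
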